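/- If n ≥ 2 is a power of 2, then the number of self-reciprocal irreducible monic polynomials of degree 2n over F_q equals (1/(2n))(q^n + [2 | q] − 1), where [2 | q] is 1 if q is even and 0 otherwise. -/

import Mathlib

open Polynomial IntermediateField

section Aux

theorem pow_sub_one_dvd_imp {q d : ℕ} (hq : 2 ≤ q) (hd : 0 < d) :
    ∀ N, q ^ d - 1 ∣ q ^ N - 1 → d ∣ N := by
  intro N
  induction N using Nat.strong_induction_on with
  | _ N ih =>
    intro h
    rcases lt_or_ge N d with hNd | hNd
    · have h1 : q ^ N < q ^ d := Nat.pow_lt_pow_right (by omega) hNd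
      have h2 : 1 ≤ q ^ N := Nat.one_le_pow _ _ (by omega)
      have h0 : q ^ N - 1 = 0 := by
        rcases Nat.eq_zero_of_dvd_of_lt h (by omega) with h0
        exact h0
      have hN0 : N = 0 := by
        by_contra hN
        have : q ≤ q ^ N := Nat.le_self_pow hN q
        omega
      simp [hN0]
    · set a := q ^ (N - d) with ha
      have h3 : 1 ≤ a := Nat.one_le_pow _ _ (by omega)
      have h4 : 1 ≤ q ^ d := Nat.one_le_pow _ _ (by omega)
      have hab : a * q ^ d = q ^ N := by rw [ha, ← pow_add]; congr 1; omega
      have hmul : a * (q ^ d - 1) + a = a * q ^ d := by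
        rw [← Nat.mul_succ]; congr 1; omega
      have e : q ^ N - 1 = a * (q ^ d - 1) + (a - 1) := by omega
      have key : q ^ d - 1 ∣ a - 1 := by
        have h' : q ^ d - 1 ∣ a * (q ^ d - 1) + (a - 1) := e ▸ h
        exact (Nat.dvd_add_right (Dvd.intro_left a rfl)).mp h'
      have hrec : d ∣ N - d := ih (N - d) (by omega) key
      obtain ⟨c, hc⟩ := hrec
      exact ⟨c + 1, by rw [Nat.mul_succ]; omega⟩

variable {F : Type*} [Field F] [Fintype F]

theorem aeval_pow_card {K : Type*} [Field K] [Algebra F K] (f : F[X]) (x : K) :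
    aeval (x ^ Fintype.card F) f = (aeval x f) ^ Fintype.card F := by
  set p := ringChar F with hp
  haveI : CharP F p := ringChar.charP F
  haveI : Fact p.Prime := ⟨CharP.char_is_prime F p⟩
  haveI : CharP K p := charP_of_injective_algebraMap (algebraMap F K).injective p
  obtain ⟨e, hpp, hq⟩ := FiniteField.card F p
  haveI : ExpChar K p := ExpChar.prime hpp
  set ψ : K →+* K := iterateFrobenius K p e with hψ
  have hψx : ∀ y : K, ψ y = y ^ Fintype.card F := fun y => by
    rw [hψ, iterateFrobenius_def, hq]
  have hcomp : ψ.comp (algebraMap F K) = algebraMap F K := by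
    ext a
    rw [RingHom.comp_apply, hψx, ← map_pow, FiniteField.pow_card]
  rw [aeval_def, aeval_def, ← hψx x, ← hψx (eval₂ (algebraMap F K) x f), hom_eval₂, hcomp]

theorem aeval_pow_card_pow {K : Type*} [Field K] [Algebra F K] (f : F[X]) (x : K) (i : ℕ) :
    aeval (x ^ Fintype.card F ^ i) f = (aeval x f) ^ Fintype.card F ^ i := by
  induction i with
  | zero => simp
  | succ i ih =>
    rw [pow_succ, pow_mul, pow_mul, aeval_pow_card, ih]

theorem pow_fix_of_dvd {K : Type*} [Monoid K] (α : K) (q d m : ℕ)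
    (h : α ^ q ^ d = α) (hdvd : d ∣ m) : α ^ q ^ m = α := by
  obtain ⟨c, rfl⟩ := hdvd
  induction c with
  | zero => simp
  | succ c ih => rw [Nat.mul_succ, pow_add, pow_mul, ih, h]

theorem pow_card_pow_injective (K : Type*) [Field K] [Algebra F K] (i : ℕ) :
    Function.Injective (fun x : K => x ^ Fintype.card F ^ i) := by
  set p := ringChar F with hp
  haveI : CharP F p := ringChar.charP F
  haveI : Fact p.Prime := ⟨CharP.char_is_prime F p⟩
  haveI : CharP K p := charP_of_injective_algebraMap (algebraMap F K).injective p
  obtain ⟨e, hpp, hq⟩ := FiniteField.card F p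
  haveI : ExpChar K p := ExpChar.prime hpp
  intro a b hab
  apply (iterateFrobenius K p ((e : ℕ) * i)).injective
  simpa only [iterateFrobenius_def, pow_mul, ← hq] using hab

/-- key structural lemma -/
theorem minpoly_deg_facts (β : AlgebraicClosure F) :
    β ^ Fintype.card F ^ (minpoly F β).natDegree = β ∧
      ∀ N, 0 < N → β ^ Fintype.card F ^ N = β → (minpoly F β).natDegree ∣ N := by
  set q := Fintype.card F with hqdef
  have hint : IsIntegral F β := Algebra.IsIntegral.isIntegral β
  set d := (minpoly F β).natDegree with hd
  have hd0 : 0 < d := minpoly.natDegree_pos hint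
  haveI : FiniteDimensional F F⟮β⟯ := adjoin.finiteDimensional hint
  have hfr : Module.finrank F F⟮β⟯ = d := adjoin.finrank hint
  haveI : Finite F⟮β⟯ := Module.finite_of_finite F
  letI : Fintype F⟮β⟯ := Fintype.ofFinite F⟮β⟯
  have hcard : Fintype.card F⟮β⟯ = q ^ d := by
    rw [Module.card_eq_pow_finrank (K := F) (V := F⟮β⟯), hfr]
  have hβE : β ∈ F⟮β⟯ := mem_adjoin_simple_self F β
  have hq2 : 2 ≤ q := Fintype.one_lt_card
  constructor
  · have h1 : (⟨β, hβE⟩ : F⟮β⟯) ^ Fintype.card F⟮β⟯ = ⟨β, hβE⟩ :=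
      FiniteField.pow_card _
    have h2 := congrArg Subtype.val h1
    rw [hcard] at h2
    simpa using h2
  · intro N hN hβN
    have hEfix : ∀ x : F⟮β⟯, (x : AlgebraicClosure F) ^ q ^ N = (x : AlgebraicClosure F) := by
      intro x
      have hx : (x : AlgebraicClosure F) ∈ F⟮β⟯.toSubalgebra := x.2
      rw [adjoin_simple_toSubalgebra_of_isAlgebraic hint.isAlgebraic,
        Algebra.adjoin_singleton_eq_range_aeval, AlgHom.mem_range] at hx
      obtain ⟨g, hg⟩ := hx
      rw [← hg, ← aeval_pow_card_pow, hβN]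
    obtain ⟨ζ, hζ⟩ := IsCyclic.exists_generator (α := F⟮β⟯ˣ)
    have hord : orderOf ζ = q ^ d - 1 := by
      rw [orderOf_eq_card_of_forall_mem_zpowers hζ, Nat.card_units,
        Nat.card_eq_fintype_card, hcard]
    have hζE : (ζ : F⟮β⟯) ^ q ^ N = (ζ : F⟮β⟯) := by
      apply Subtype.ext
      push_cast
      exact hEfix (ζ : F⟮β⟯)
    have h1 : ζ ^ q ^ N = ζ := Units.ext (by push_cast; exact_mod_cast hζE)
    have hζpow : ζ ^ (q ^ N - 1) = 1 := by
      have h2 : q ^ N - 1 + 1 = q ^ N := by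
        have : 1 ≤ q ^ N := Nat.one_le_pow _ _ (by omega)
        omega
      have h3 : ζ ^ (q ^ N - 1) * ζ = ζ := by
        rw [← pow_succ, h2, h1]
      calc ζ ^ (q ^ N - 1) = ζ ^ (q ^ N - 1) * ζ * ζ⁻¹ := by group
        _ = ζ * ζ⁻¹ := by rw [h3]
        _ = 1 := mul_inv_cancel ζ
    have hdvd : q ^ d - 1 ∣ q ^ N - 1 := hord ▸ orderOf_dvd_of_pow_eq_one hζpow
    exact pow_sub_one_dvd_imp hq2 hd0 _ hdvd

theorem minpoly_mem_P (n : ℕ) (hn : 2 ≤ n) (hpow : ∃ k, n = 2 ^ k)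
    (α : AlgebraicClosure F) (h1 : α ^ (Fintype.card F ^ n + 1) = 1) (h2 : α ^ 2 ≠ 1) :
    (minpoly F α).Monic ∧ Irreducible (minpoly F α) ∧
      (minpoly F α).reverse = minpoly F α ∧ (minpoly F α).natDegree = 2 * n := by
  set q := Fintype.card F with hqdef
  have hq2 : 2 ≤ q := Fintype.one_lt_card
  have hα0 : α ≠ 0 := by
    rintro rfl
    rw [zero_pow (by positivity)] at h1
    exact zero_ne_one h1
  have hint : IsIntegral F α := Algebra.IsIntegral.isIntegral α
  have hmonic := minpoly.monic hint
  have hirr := minpoly.irreducible hint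
  have hinv : α ^ q ^ n = α⁻¹ := by
    apply eq_inv_of_mul_eq_one_left
    rw [← pow_succ, h1]
  have h2n : α ^ q ^ (2 * n) = α := by
    rw [two_mul, pow_add, pow_mul, hinv, inv_pow, hinv, inv_inv]
  obtain ⟨hfix, hdvd⟩ := minpoly_deg_facts α
  have hddvd : (minpoly F α).natDegree ∣ 2 * n := hdvd (2 * n) (by omega) h2n
  -- degree is exactly 2n
  have hdeg : (minpoly F α).natDegree = 2 * n := by
    obtain ⟨k, rfl⟩ := hpow
    have h2n' : 2 * 2 ^ k = 2 ^ (k + 1) := (pow_succ' 2 k).symm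
    rw [h2n'] at hddvd
    obtain ⟨j, hj, hdj⟩ := (Nat.dvd_prime_pow Nat.prime_two).mp hddvd
    rcases Nat.lt_or_ge j (k + 1) with hjk | hjk
    · exfalso
      have hdn : (minpoly F α).natDegree ∣ 2 ^ k :=
        hdj ▸ pow_dvd_pow 2 (by omega)
      have hfixn : α ^ q ^ 2 ^ k = α := pow_fix_of_dvd α q _ _ hfix hdn
      rw [hinv] at hfixn
      apply h2
      rw [pow_two]
      nth_rewrite 1 [← hfixn]
      exact inv_mul_cancel₀ hα0
    · rw [h2n', hdj]
      congr 1
      omega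
  refine ⟨hmonic, hirr, ?_, hdeg⟩
  -- self-reciprocality
  set f := minpoly F α with hf
  have hrootinv : aeval α⁻¹ f = 0 := by
    rw [← hinv, aeval_pow_card_pow, minpoly.aeval, zero_pow (by positivity)]
  have hf0 : f.coeff 0 ≠ 0 := minpoly.coeff_zero_ne_zero hint hα0
  have hfne : f ≠ 0 := hmonic.ne_zero
  have htr : f.natTrailingDegree = 0 := by
    rw [natTrailingDegree_eq_zero]; exact Or.inr hf0
  have hrevdeg : f.reverse.natDegree = f.natDegree := by
    rw [reverse_natDegree, htr, Nat.sub_zero]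
  set g : F[X] := C (f.coeff 0)⁻¹ * f.reverse with hg
  have hgmonic : g.Monic := by
    have : g.leadingCoeff = 1 := by
      rw [hg, leadingCoeff_mul, leadingCoeff_C, reverse_leadingCoeff, trailingCoeff,
        htr, inv_mul_cancel₀ hf0]
    exact this
  have hgdeg : g.natDegree = f.natDegree := by
    rw [hg, natDegree_C_mul (inv_ne_zero hf0), hrevdeg]
  have hmininv : minpoly F α⁻¹ = f := (minpoly.eq_of_irreducible_of_monic hirr hrootinv hmonic).symm
  have hfdvdg : f ∣ g := by
    rw [← hmininv]
    apply minpoly.dvd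
    letI := invertibleOfNonzero hα0
    have hrev0 : aeval α⁻¹ f.reverse = 0 := by
      have := (eval₂_reverse_eq_zero_iff (algebraMap F (AlgebraicClosure F)) α f).mpr
        (by rw [← aeval_def, minpoly.aeval])
      rwa [invOf_eq_inv, ← aeval_def] at this
    rw [hg, map_mul, hrev0, mul_zero]
  have hfg : g = f := eq_of_monic_of_dvd_of_natDegree_le hmonic hgmonic hfdvdg hgdeg.le
  -- show f.coeff 0 = 1
  have heval1 : eval 1 f.reverse = eval 1 f := by
    letI : Invertible (1 : F) := invertibleOne
    have := eval₂_reverse_mul_pow (RingHom.id F) 1 f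
    rwa [invOf_one, one_pow, mul_one, eval₂_eq_eval_map, eval₂_eq_eval_map, Polynomial.map_id, Polynomial.map_id] at this
  have heval1' : eval 1 f = (f.coeff 0)⁻¹ * eval 1 f := by
    conv_lhs => rw [← hfg]
    rw [hg, eval_mul, eval_C, heval1]
  have hne1 : eval 1 f ≠ 0 := by
    intro hroot
    have hdvd1 : (X - C 1) ∣ f := dvd_iff_isRoot.mpr hroot
    obtain ⟨c, hc⟩ := hdvd1
    rcases hirr.isUnit_or_isUnit hc with hu | hu
    · exact (not_isUnit_of_natDegree_pos _ (by rw [natDegree_X_sub_C]; exact Nat.one_pos)) hu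
    · have hc0 : c ≠ 0 := by rintro rfl; rw [mul_zero] at hc; exact hfne hc
      have : f.natDegree = 1 := by
        rw [hc, natDegree_mul (X_sub_C_ne_zero 1) hc0, natDegree_X_sub_C,
          natDegree_eq_zero_of_isUnit hu]
      omega
  have hf01 : (f.coeff 0 : F) = 1 := by
    have h3 : ((f.coeff 0)⁻¹ - 1) * eval 1 f = 0 := by
      rw [sub_mul, one_mul, ← heval1', sub_self]
    rcases mul_eq_zero.mp h3 with h4 | h4
    · have h5 : (f.coeff 0)⁻¹ = 1 := sub_eq_zero.mp h4
      rw [← inv_inv (f.coeff 0), h5, inv_one]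
    · exact absurd h4 hne1
  have hrevg : f.reverse = g := by rw [hg, hf01, inv_one, map_one, one_mul]
  rw [hrevg, hfg]

theorem root_mem_A (n : ℕ) (hn : 2 ≤ n) (hpow : ∃ k, n = 2 ^ k) (f : F[X])
    (hmonic : f.Monic) (hirr : Irreducible f) (hrev : f.reverse = f)
    (hdeg : f.natDegree = 2 * n) (β : AlgebraicClosure F) (hβ : aeval β f = 0) :
    β ^ (Fintype.card F ^ n + 1) = 1 ∧ β ^ 2 ≠ 1 ∧ minpoly F β = f := by
  classical
  set q := Fintype.card F with hqdef
  have hq2 : 2 ≤ q := Fintype.one_lt_card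
  have hfne : f ≠ 0 := hmonic.ne_zero
  have hmin : minpoly F β = f := (minpoly.eq_of_irreducible_of_monic hirr hβ hmonic).symm
  -- f(0) = 1, so β ≠ 0
  have hf0 : f.coeff 0 = 1 := by
    conv_lhs => rw [← hrev]
    rw [coeff_zero_reverse, hmonic.leadingCoeff]
  have hβ0 : β ≠ 0 := by
    rintro rfl
    rw [aeval_def, eval₂_at_zero, hf0, map_one] at hβ
    exact one_ne_zero hβ
  -- minpoly facts
  obtain ⟨hfix0, hdvd⟩ := minpoly_deg_facts β
  rw [hmin, hdeg] at hfix0 hdvd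
  -- β² ≠ 1
  have hβ2 : β ^ 2 ≠ 1 := by
    intro hβ2
    have hdvd2 : f ∣ (X ^ 2 - C 1 : F[X]) := by
      rw [← hmin]
      apply minpoly.dvd
      rw [map_sub, map_pow, aeval_X, aeval_C, map_one, hβ2, sub_self]
    have hXne : (X ^ 2 - C 1 : F[X]) ≠ 0 := by
      intro h0
      have h2' : (X ^ 2 - C (1:F)).natDegree = 2 := natDegree_X_pow_sub_C
      rw [h0] at h2'
      simp at h2'
    have := natDegree_le_of_dvd hdvd2 hXne
    rw [hdeg, natDegree_X_pow_sub_C] at this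
    omega
  refine ⟨?_, hβ2, hmin⟩
  -- the roots of f are exactly the Frobenius orbit of β
  have hsep : (f.map (algebraMap F (AlgebraicClosure F))).Separable :=
    (PerfectField.separable_of_irreducible hirr).map
  have hmapne : f.map (algebraMap F (AlgebraicClosure F)) ≠ 0 :=
    Polynomial.map_ne_zero_iff (algebraMap F (AlgebraicClosure F)).injective |>.mpr hfne
  have hrootmem : ∀ x : (AlgebraicClosure F), aeval x f = 0 → x ∈ (f.map (algebraMap F (AlgebraicClosure F))).roots.toFinset := by
    intro x hx
    rw [Multiset.mem_toFinset, mem_roots hmapne, IsRoot.def, eval_map, ← aeval_def]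
    exact hx
  have horbit_root : ∀ i : ℕ, aeval (β ^ q ^ i) f = 0 := by
    intro i
    rw [aeval_pow_card_pow (K := AlgebraicClosure F), hβ, zero_pow (by positivity)]
  -- distinctness
  have horbit_inj : ∀ i j, i ≤ j → j < 2 * n → β ^ q ^ i = β ^ q ^ j → i = j := by
    intro i j hij hj he
    by_contra hne
    have ht : 0 < j - i := by omega
    have he2 : (β ^ q ^ (j - i)) ^ q ^ i = β ^ q ^ i := by
      rw [← pow_mul, ← pow_add]
      have : j - i + i = j := by omega
      rw [this, ← he]
    have hfixt : β ^ q ^ (j - i) = β := pow_card_pow_injective (AlgebraicClosure F) i he2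
    have hle := Nat.le_of_dvd ht (hdvd (j - i) ht hfixt)
    omega
  classical
  set T : Finset (AlgebraicClosure F) :=
    (Finset.range (2 * n)).image (fun i => β ^ q ^ i) with hT
  have hTcard : T.card = 2 * n := by
    rw [hT, Finset.card_image_of_injOn, Finset.card_range]
    intro i hi j hj he
    simp only [Finset.coe_range, Set.mem_Iio] at hi hj
    rcases le_total i j with h | h
    · exact horbit_inj i j h hj he
    · exact (horbit_inj j i h hi he.symm).symm
  set R : Finset (AlgebraicClosure F) :=
    (f.map (algebraMap F (AlgebraicClosure F))).roots.toFinset with hR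
  have hRcard : R.card = 2 * n := by
    rw [hR, Multiset.toFinset_card_of_nodup (nodup_roots hsep),
      splits_iff_card_roots.mp (IsAlgClosed.splits _),
      hmonic.natDegree_map, hdeg]
  have hTsub : T ⊆ R := by
    intro x hx
    rw [hT, Finset.mem_image] at hx
    obtain ⟨i, _, rfl⟩ := hx
    exact hrootmem _ (horbit_root i)
  have hTR : T = R := Finset.eq_of_subset_of_card_le hTsub (by omega)
  have hinvroot : β⁻¹ ∈ R := by
    apply hrootmem
    letI := invertibleOfNonzero hβ0
    have h5 := (eval₂_reverse_eq_zero_iff (algebraMap F (AlgebraicClosure F)) β f).mpr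
      (by rw [← aeval_def]; exact hβ)
    rw [hrev, invOf_eq_inv, ← aeval_def] at h5
    exact h5
  rw [← hTR, hT, Finset.mem_image] at hinvroot
  obtain ⟨j, hjr, hje⟩ := hinvroot
  rw [Finset.mem_range] at hjr
  have hj0 : j ≠ 0 := by
    rintro rfl
    rw [pow_zero, pow_one] at hje
    apply hβ2
    rw [pow_two]
    nth_rewrite 2 [hje]
    exact mul_inv_cancel₀ hβ0
  have h2j : β ^ q ^ (2 * j) = β := by
    rw [two_mul, pow_add, pow_mul, hje, inv_pow, hje, inv_inv]
  obtain ⟨c, hc⟩ := hdvd (2 * j) (by omega) h2j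
  have hjn : j = n := by
    rcases c with _ | _ | c
    · have h5 : 2 * j = 0 := by simpa using hc
      omega
    · have h5 : 2 * j = 2 * n := by simpa using hc
      omega
    · have h4 : 2 * n * 2 ≤ 2 * n * (c + 2) := Nat.mul_le_mul_left _ (by omega)
      have h6 : 2 * n * 2 ≤ 2 * j := hc ▸ h4
      omega
  rw [hjn] at hje
  rw [pow_succ, hje, inv_mul_cancel₀ hβ0]

end Aux

/-- If `n ≥ 2` is a power of 2, then the number of self-reciprocal irreducible monic
polynomials of degree `2n` over `F_q` is `(1/(2n)) (q^n + [2 ∣ q] - 1)`. -/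
theorem S_pow_two
    {F : Type*} [Field F] [Fintype F] (n : ℕ) (hn : 2 ≤ n) (hpow : ∃ k, n = 2 ^ k) :
    ({f : F[X] | f.Monic ∧ Irreducible f ∧ f.reverse = f ∧ f.natDegree = 2 * n}.ncard : ℚ) =
      (1 / (2 * (n : ℚ))) *
        ((Fintype.card F : ℚ) ^ n + (if Even (Fintype.card F) then 1 else 0) - 1) := by
  classical
  set q := Fintype.card F with hqdef
  have hq2 : 2 ≤ q := Fintype.one_lt_card
  set m := q ^ n + 1 with hm
  have hqn1 : 1 ≤ q ^ n := Nat.one_le_pow _ _ (by omega)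
  have hm0 : 0 < m := by omega
  set Pset : Set F[X] :=
    {f : F[X] | f.Monic ∧ Irreducible f ∧ f.reverse = f ∧ f.natDegree = 2 * n} with hPset
  -- square roots of one
  have hsq : ∀ x : AlgebraicClosure F, x ^ 2 = 1 ↔ (x = 1 ∨ x = -1) := by
    intro x
    constructor
    · intro h
      have h1 : (x - 1) * (x + 1) = 0 := by linear_combination h
      rcases mul_eq_zero.mp h1 with h2 | h2
      · exact Or.inl (sub_eq_zero.mp h2)
      · exact Or.inr (eq_neg_of_add_eq_zero_left h2)
    · rintro (rfl | rfl) <;> simp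
  set sA : Finset (AlgebraicClosure F) :=
    (nthRoots m (1 : AlgebraicClosure F)).toFinset \ ({1, -1} : Finset (AlgebraicClosure F))
    with hsA
  have hmem_sA : ∀ x, x ∈ sA ↔ (x ^ m = 1 ∧ x ^ 2 ≠ 1) := by
    intro x
    rw [hsA, Finset.mem_sdiff, Multiset.mem_toFinset, mem_nthRoots hm0]
    constructor
    · rintro ⟨h1, h2⟩
      refine ⟨h1, fun hc => h2 ?_⟩
      rcases (hsq x).mp hc with rfl | rfl
      · exact Finset.mem_insert_self _ _
      · exact Finset.mem_insert_of_mem (Finset.mem_singleton_self _)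
    · rintro ⟨h1, h2⟩
      refine ⟨h1, fun hc => h2 ?_⟩
      apply (hsq x).mpr
      rcases Finset.mem_insert.mp hc with rfl | hc
      · exact Or.inl rfl
      · exact Or.inr (Finset.mem_singleton.mp hc)
  -- claims
  have claim1 : ∀ x ∈ sA, minpoly F x ∈ Pset := by
    intro x hx
    rw [hmem_sA] at hx
    obtain ⟨h1, h2, h3, h4⟩ := minpoly_mem_P n hn hpow x hx.1 hx.2
    exact ⟨h1, h2, h3, h4⟩
  have claim2 : ∀ f ∈ Pset, ∀ β : AlgebraicClosure F, aeval β f = 0 →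
      β ∈ sA ∧ minpoly F β = f := by
    intro f hf β hβ
    obtain ⟨hmonic, hirr, hrev, hdeg⟩ := hf
    obtain ⟨h1, h2, h3⟩ := root_mem_A n hn hpow f hmonic hirr hrev hdeg β hβ
    exact ⟨(hmem_sA β).mpr ⟨h1, h2⟩, h3⟩
  have claim3 : ∀ f ∈ Pset, ∃ β : AlgebraicClosure F, aeval β f = 0 := by
    intro f hf
    obtain ⟨hmonic, hirr, hrev, hdeg⟩ := hf
    have hdegne : (f.map (algebraMap F (AlgebraicClosure F))).degree ≠ 0 := by
      have hpos : 0 < (f.map (algebraMap F (AlgebraicClosure F))).natDegree := by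
        rw [hmonic.natDegree_map, hdeg]; omega
      exact ne_of_gt (natDegree_pos_iff_degree_pos.mp hpos)
    obtain ⟨x, hx⟩ := IsAlgClosed.exists_root _ hdegne
    exact ⟨x, by rwa [IsRoot.def, eval_map, ← aeval_def] at hx⟩
  set t : Finset F[X] := sA.image (minpoly F) with ht
  have hPt : Pset = ↑t := by
    ext f
    constructor
    · intro hf
      obtain ⟨β, hβ⟩ := claim3 f hf
      obtain ⟨hβA, hβmin⟩ := claim2 f hf β hβ
      rw [ht]
      push_cast
      exact ⟨β, hβA, hβmin⟩
    · intro hf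
      rw [ht] at hf
      push_cast at hf
      obtain ⟨x, hx, rfl⟩ := hf
      exact claim1 x hx
  have hfiber : ∀ f ∈ t, (sA.filter (fun x => minpoly F x = f)).card = 2 * n := by
    intro f hft
    have hf : f ∈ Pset := by rw [hPt]; exact_mod_cast hft
    obtain ⟨hmonic, hirr, hrev, hdeg⟩ := hf
    have hsep : (f.map (algebraMap F (AlgebraicClosure F))).Separable :=
      (PerfectField.separable_of_irreducible hirr).map
    have hfil : sA.filter (fun x => minpoly F x = f) =
        (f.map (algebraMap F (AlgebraicClosure F))).roots.toFinset := by
      ext x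
      rw [Finset.mem_filter, Multiset.mem_toFinset, mem_roots', IsRoot.def, eval_map, ← aeval_def]
      constructor
      · rintro ⟨hxA, rfl⟩
        exact ⟨Polynomial.map_ne_zero_iff (algebraMap F (AlgebraicClosure F)).injective
          |>.mpr hmonic.ne_zero, by rw [minpoly.aeval]⟩
      · rintro ⟨-, hx⟩
        exact claim2 f ⟨hmonic, hirr, hrev, hdeg⟩ x hx
    rw [hfil, Multiset.toFinset_card_of_nodup (nodup_roots hsep),
      splits_iff_card_roots.mp (IsAlgClosed.splits _),
      hmonic.natDegree_map, hdeg]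
  have hsum : sA.card = t.card * (2 * n) := by
    rw [Finset.card_eq_sum_card_fiberwise (fun x hx => Finset.mem_image_of_mem (minpoly F) hx)]
    exact Finset.sum_const_nat hfiber
  -- cardinality of the nth roots finset
  have hqK : ((q : ℕ) : AlgebraicClosure F) = 0 := by
    rw [← map_natCast (algebraMap F (AlgebraicClosure F)) q, hqdef,
      FiniteField.cast_card_eq_zero, map_zero]
  have hmK : ((m : ℕ) : AlgebraicClosure F) ≠ 0 := by
    rw [hm]
    push_cast
    rw [hqK, zero_pow (by omega : n ≠ 0), zero_add]
    exact one_ne_zero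
  have hsepm : ((X : (AlgebraicClosure F)[X]) ^ m - C 1).Separable :=
    separable_X_pow_sub_C 1 hmK one_ne_zero
  have hnth_card : (nthRoots m (1 : AlgebraicClosure F)).toFinset.card = m := by
    rw [nthRoots, Multiset.toFinset_card_of_nodup (nodup_roots hsepm),
      splits_iff_card_roots.mp (IsAlgClosed.splits _), natDegree_X_pow_sub_C]
  have h1mem : (1 : AlgebraicClosure F) ∈ (nthRoots m (1 : AlgebraicClosure F)).toFinset := by
    rw [Multiset.mem_toFinset, mem_nthRoots hm0, one_pow]
  -- final computation, split on parity
  have hPcard : (Pset.ncard : ℚ) = (t.card : ℚ) := by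
    rw [hPt, Set.ncard_coe_finset]
  rw [hPcard]
  have h2n0 : ((2 : ℚ) * n) ≠ 0 := by positivity
  by_cases hev : Even q
  · -- char 2
    have hchar2 : ringChar F = 2 :=
      FiniteField.even_card_iff_char_two.mpr (Nat.even_iff.mp hev)
    haveI : CharP F 2 := by rw [← hchar2]; exact ringChar.charP F
    haveI : CharP (AlgebraicClosure F) 2 :=
      charP_of_injective_algebraMap (algebraMap F (AlgebraicClosure F)).injective 2
    have hneg : (-1 : AlgebraicClosure F) = 1 := CharTwo.neg_eq 1
    have hpair : ({1, -1} : Finset (AlgebraicClosure F)) = {1} := by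
      rw [hneg]; simp
    have hsAcard : sA.card = q ^ n := by
      rw [hsA, hpair, Finset.card_sdiff_of_subset (Finset.singleton_subset_iff.mpr h1mem),
        hnth_card, Finset.card_singleton, hm]
      omega
    rw [if_pos hev]
    have hcast : ((q : ℚ)) ^ n = ((sA.card : ℕ) : ℚ) := by
      rw [hsAcard]; push_cast; ring
    rw [hsum] at hcast
    push_cast at hcast
    field_simp
    linarith
  · -- odd char
    have hneg_ne : (-1 : AlgebraicClosure F) ≠ 1 := by
      intro h
      have h2 : ((2 : ℕ) : AlgebraicClosure F) = 0 := by
        push_cast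
        linear_combination -h
      rw [← map_natCast (algebraMap F (AlgebraicClosure F)) 2] at h2
      have h2F : ((2 : ℕ) : F) = 0 := by
        apply (algebraMap F (AlgebraicClosure F)).injective
        rw [h2, map_zero]
      have hdvd2 : ringChar F ∣ 2 := (CharP.cast_eq_zero_iff F (ringChar F) 2).mp h2F
      haveI : CharP F (ringChar F) := ringChar.charP F
      have hprime : Nat.Prime (ringChar F) := CharP.char_is_prime F (ringChar F)
      rcases (Nat.dvd_prime Nat.prime_two).mp hdvd2 with hch | hch
      · exact hprime.ne_one hch
      · exact hev (Nat.even_iff.mpr (FiniteField.even_card_iff_char_two.mp hch))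
    have hodd : Odd q := Nat.not_even_iff_odd.mp hev
    have hm_even : Even m := by
      rw [hm]
      exact (hodd.pow).add_one
    have hneg_mem : (-1 : AlgebraicClosure F) ∈ (nthRoots m (1 : AlgebraicClosure F)).toFinset := by
      rw [Multiset.mem_toFinset, mem_nthRoots hm0]
      exact Even.neg_one_pow hm_even
    have hpairsub : ({1, -1} : Finset (AlgebraicClosure F)) ⊆
        (nthRoots m (1 : AlgebraicClosure F)).toFinset := by
      rw [Finset.insert_subset_iff]
      exact ⟨h1mem, Finset.singleton_subset_iff.mpr hneg_mem⟩
    have hpaircard : ({1, -1} : Finset (AlgebraicClosure F)).card = 2 := by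
      rw [Finset.card_insert_of_notMem (by
        simp only [Finset.mem_singleton]
        exact fun h => hneg_ne h.symm), Finset.card_singleton]
    have hsAcard : sA.card = q ^ n - 1 := by
      rw [hsA, Finset.card_sdiff_of_subset hpairsub, hnth_card, hpaircard, hm]
      omega
    rw [if_neg hev]
    have hcast : ((sA.card : ℕ) : ℚ) = ((q : ℚ)) ^ n - 1 := by
      rw [hsAcard, Nat.cast_sub hqn1]
      push_cast
      ring
    rw [hsum] at hcast
    push_cast at hcast
    field_simp
    linarith
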